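/- arXiv:2204.06730 — 3 statements merged into one kernel-verified Lean document; each statement's English description precedes it below -/
import Mathlib

section
/- (Disjunction-free conservativity) Let A be a formula of the disjunction-free language L⁻_{⊥,⊃} (built from propositional variables and ⊥ using only ∧, →, ⊃). If ⊨⊥ A (A is true at the base state of every S⊥-model), then ⊨⊃ A (A is true at every world of every S⁻⊥-model). -/
/-- Formulas of the language L_{⊥,⊃}. -/
inductive Formula : Type
  | var : ℕ → Formula
  | bot : Formula
  | and : Formula → Formula → Formula
  | or  : Formula → Formula → Formula
  | imp : Formula → Formula → Formula
  | sup : Formula → Formula → Formula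

/-- A is disjunction-free, i.e. a formula of L⁻_{⊥,⊃}. -/
def Formula.orFree : Formula → Prop
  | .var _ => True
  | .bot => True
  | .and A B => A.orFree ∧ B.orFree
  | .or _ _ => False
  | .imp A B => A.orFree ∧ B.orFree
  | .sup A B => A.orFree ∧ B.orFree

/-- An S⁻⊥-model ⟨W, ≤, V⟩ (no base state). -/
structure KModel where
  W : Type
  le : W → W → Prop
  refl : ∀ w, le w w
  trans : ∀ u v w, le u v → le v w → le u w
  V : W → ℕ → Prop
  hered : ∀ w₁ w₂ p, V w₁ p → le w₁ w₂ → V w₂ p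

/-- The interpretation I_⊃ : `M.sat A w` means I_⊃(w, A) = 1. -/
def KModel.sat (M : KModel) : Formula → M.W → Prop
  | .var p, w => M.V w p
  | .bot, _ => False
  | .and A B, w => M.sat A w ∧ M.sat B w
  | .or A B, w => M.sat A w ∨ M.sat B w
  | .sup A B, w => (∃ x, ¬ M.sat A x) ∨ M.sat B w
  | .imp A B, w => ∀ x, M.le w x → M.sat A x → M.sat B x

/-- ⊨⊃ A : A is true at every world of every S⁻⊥-model. -/
def ValidSup (A : Formula) : Prop := ∀ (M : KModel) (w : M.W), M.sat A w

/-- ⊨⊥ A : A is true at the base state of every S⊥-model, i.e. of every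
S⁻⊥-model having a least element g. -/
def ValidBot (A : Formula) : Prop :=
  ∀ (M : KModel) (g : M.W), (∀ w, M.le g w) → M.sat A g

/-- Extension of a model by a fresh least element `none`. -/
def rootExt (M : KModel) : KModel where
  W := Option M.W
  le a b := match a, b with
    | none, _ => True
    | some _, none => False
    | some u, some v => M.le u v
  refl a := by cases a <;> first | trivial | exact M.refl _
  trans a b c hab hbc := by
    cases a <;> cases b <;> cases c <;> simp_all
    exact M.trans _ _ _ hab hbc
  V a p := match a with
    | none => ∀ x, M.V x p
    | some u => M.V u p
  hered a b p h hle := by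
    cases a with
    | none =>
        cases b with
        | none => exact h
        | some v => exact h v
    | some u =>
        cases b with
        | none => exact absurd hle (by intro hc; exact hc)
        | some v => exact M.hered _ _ _ h hle

lemma rootExt_le_none (M : KModel) (w : (rootExt M).W) : (rootExt M).le none w := by
  trivial

lemma key (M : KModel) (hne : Nonempty M.W) :
    ∀ A : Formula, A.orFree →
      (∀ u, (rootExt M).sat A (some u) ↔ M.sat A u) ∧
      ((rootExt M).sat A none ↔ ∀ u, M.sat A u) := by
  intro A
  induction A with
  | var p => intro _; exact ⟨fun u => Iff.rfl, Iff.rfl⟩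
  | bot =>
      intro _
      refine ⟨fun u => Iff.rfl, ?_⟩
      constructor
      · intro hc; exact absurd hc id
      · intro hc; obtain ⟨u⟩ := hne; exact hc u
  | or A B ihA ihB => intro hf; exact absurd hf id
  | and A B ihA ihB =>
      rintro ⟨hA, hB⟩
      obtain ⟨ihA1, ihA2⟩ := ihA hA
      obtain ⟨ihB1, ihB2⟩ := ihB hB
      constructor
      · intro u; simp [KModel.sat, ihA1, ihB1]
      · simp [KModel.sat, ihA2, ihB2]
        constructor
        · rintro ⟨h1, h2⟩ u; exact ⟨h1 u, h2 u⟩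
        · intro h; exact ⟨fun u => (h u).1, fun u => (h u).2⟩
  | imp A B ihA ihB =>
      rintro ⟨hA, hB⟩
      obtain ⟨ihA1, ihA2⟩ := ihA hA
      obtain ⟨ihB1, ihB2⟩ := ihB hB
      constructor
      · intro u
        constructor
        · intro h v hle hav
          exact (ihB1 v).mp (h (some v) hle ((ihA1 v).mpr hav))
        · intro h x hle hax
          cases x with
          | none => exact absurd hle (by intro hc; exact hc)
          | some v => exact (ihB1 v).mpr (h v hle ((ihA1 v).mp hax))
      · constructor
        · intro h u v hle hav
          exact (ihB1 v).mp (h (some v) trivial ((ihA1 v).mpr hav))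
        · intro h x _ hax
          cases x with
          | none =>
              refine (ihB2).mpr (fun u => ?_)
              exact h u u (M.refl u) (((ihA2).mp hax) u)
          | some v => exact (ihB1 v).mpr (h v v (M.refl v) ((ihA1 v).mp hax))
  | sup A B ihA ihB =>
      rintro ⟨hA, hB⟩
      obtain ⟨ihA1, ihA2⟩ := ihA hA
      obtain ⟨ihB1, ihB2⟩ := ihB hB
      have hex : (∃ x : (rootExt M).W, ¬ (rootExt M).sat A x) ↔ ∃ u, ¬ M.sat A u := by
        constructor
        · rintro ⟨x, hx⟩
          cases x with
          | none =>
              by_contra hc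
              push_neg at hc
              exact hx ((ihA2).mpr hc)
          | some u => exact ⟨u, fun h => hx ((ihA1 u).mpr h)⟩
        · rintro ⟨u, hu⟩
          exact ⟨some u, fun h => hu ((ihA1 u).mp h)⟩
      constructor
      · intro u
        show ((∃ x, ¬ (rootExt M).sat A x) ∨ (rootExt M).sat B (some u)) ↔ _
        rw [hex, ihB1]
        rfl
      · show ((∃ x, ¬ (rootExt M).sat A x) ∨ (rootExt M).sat B none) ↔ _
        rw [hex, ihB2]
        constructor
        · rintro (⟨u, hu⟩ | h) v
          · exact Or.inl ⟨u, hu⟩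
          · exact Or.inr (h v)
        · intro h
          by_cases hc : ∃ u, ¬ M.sat A u
          · exact Or.inl hc
          · push_neg at hc
            refine Or.inr (fun v => ?_)
            rcases h v with (⟨u, hu⟩ | hb)
            · exact absurd (hc u) hu
            · exact hb

/-- Disjunction-free conservativity: for disjunction-free A,
⊨⊥ A implies ⊨⊃ A. -/
theorem orfree_conservativity (A : Formula) (hA : A.orFree)
    (h : ValidBot A) : ValidSup A := by
  intro M w
  have hroot := h (rootExt M) none (rootExt_le_none M)
  exact ((key M ⟨w⟩ A hA).2.mp hroot) w
end

section
/- (Soundness and completeness of S⊥w) For every set of formulas Γ and every formula A of L_{⊥,⊃}: Γ ⊢_{⊥w} A in the system S⊥w if and only if Γ ⊨_{⊥w} A with respect to S⊥w-models. -/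
/-- An S⊥w-model ⟨g, W, ≤, V⟩, where V is defined on Prop ∪ {⊥}
(the ⊥-part is `Vbot`), is hereditary, and satisfies V(g,⊥)=0. -/
structure WModel where
  W : Type
  le : W → W → Prop
  refl : ∀ w, le w w
  trans : ∀ u v w, le u v → le v w → le u w
  g : W
  least : ∀ w, le g w
  V : W → ℕ → Prop
  Vbot : W → Prop
  hered : ∀ w₁ w₂ p, V w₁ p → le w₁ w₂ → V w₂ p
  heredBot : ∀ w₁ w₂, Vbot w₁ → le w₁ w₂ → Vbot w₂
  botG : ¬ Vbot g

/-- The interpretation I : `M.sat A w` means I(w, A) = 1. -/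
def WModel.sat (M : WModel) : Formula → M.W → Prop
  | .var p, w => M.V w p
  | .bot, w => M.Vbot w
  | .and A B, w => M.sat A w ∧ M.sat B w
  | .or A B, w => M.sat A w ∨ M.sat B w
  | .sup A B, w => ¬ M.sat A M.g ∨ M.sat B w
  | .imp A B, w => ∀ x, M.le w x → M.sat A x → M.sat B x

/-- Semantic consequence Γ ⊨_{⊥w} A. -/
def WConseq (Γ : Set Formula) (A : Formula) : Prop :=
  ∀ M : WModel, (∀ B ∈ Γ, M.sat B M.g) → M.sat A M.g

/-- The Hilbert system S⊥w : `WDeriv Γ A` means Γ ⊢_{⊥w} A. -/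
inductive WDeriv : Set Formula → Formula → Prop
  | hyp {Γ A} : A ∈ Γ → WDeriv Γ A
  | ax1 {Γ} (A B : Formula) : WDeriv Γ (A.imp (B.imp A))
  | ax2 {Γ} (A B C : Formula) :
      WDeriv Γ ((A.imp (B.imp C)).imp ((A.imp B).imp (A.imp C)))
  | ax3 {Γ} (A B : Formula) : WDeriv Γ ((A.and B).imp A)
  | ax4 {Γ} (A B : Formula) : WDeriv Γ ((A.and B).imp B)
  | ax5 {Γ} (A B C : Formula) :
      WDeriv Γ ((C.imp A).imp ((C.imp B).imp (C.imp (A.and B))))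
  | ax6 {Γ} (A B : Formula) : WDeriv Γ (A.imp (A.or B))
  | ax7 {Γ} (A B : Formula) : WDeriv Γ (B.imp (A.or B))
  | ax8 {Γ} (A B C : Formula) :
      WDeriv Γ ((A.imp C).imp ((B.imp C).imp ((A.or B).imp C)))
  | axM1 {Γ} (A B : Formula) : WDeriv Γ ((A.imp B).sup (A.sup B))
  | axM2 {Γ} (A B C : Formula) :
      WDeriv Γ ((A.sup (B.sup C)).imp ((A.sup B).sup (A.sup C)))
  | axM3 {Γ} (A B C : Formula) :
      WDeriv Γ ((A.sup (B.imp C)).imp (B.imp (A.sup C)))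
  | axM4 {Γ} (A B C : Formula) :
      WDeriv Γ ((A.imp (B.sup C)).imp (B.sup (A.imp C)))
  | axM5 {Γ} (A B C : Formula) :
      WDeriv Γ (((A.sup B).sup C).imp ((A.sup C).imp C))
  | axM6 {Γ} (A B C : Formula) :
      WDeriv Γ ((A.sup C).imp ((B.sup C).imp ((A.or B).sup C)))
  | axE {Γ} (A : Formula) : WDeriv Γ (Formula.bot.sup A)
  | mp {Γ A B} : WDeriv Γ A → WDeriv Γ (A.sup B) → WDeriv Γ B

open Formula in
theorem WDeriv.mono : ∀ {Γ A}, WDeriv Γ A → ∀ {Γ' : Set Formula}, Γ ⊆ Γ' → WDeriv Γ' A := by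
  intro Γ A h
  induction h with
  | hyp h => exact fun hs => .hyp (hs h)
  | mp _ _ ih1 ih2 => exact fun hs => (ih1 hs).mp (ih2 hs)
  | ax1 A B => exact fun _ => .ax1 A B
  | ax2 A B C => exact fun _ => .ax2 A B C
  | ax3 A B => exact fun _ => .ax3 A B
  | ax4 A B => exact fun _ => .ax4 A B
  | ax5 A B C => exact fun _ => .ax5 A B C
  | ax6 A B => exact fun _ => .ax6 A B
  | ax7 A B => exact fun _ => .ax7 A B
  | ax8 A B C => exact fun _ => .ax8 A B C
  | axM1 A B => exact fun _ => .axM1 A B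
  | axM2 A B C => exact fun _ => .axM2 A B C
  | axM3 A B C => exact fun _ => .axM3 A B C
  | axM4 A B C => exact fun _ => .axM4 A B C
  | axM5 A B C => exact fun _ => .axM5 A B C
  | axM6 A B C => exact fun _ => .axM6 A B C
  | axE A => exact fun _ => .axE A

theorem WDeriv.cut : ∀ {Δ X}, WDeriv Δ X → ∀ {Γ : Set Formula}, (∀ Y ∈ Δ, WDeriv Γ Y) → WDeriv Γ X := by
  intro Δ X h
  induction h with
  | hyp h => exact fun hs => hs _ h
  | mp _ _ ih1 ih2 => exact fun hs => (ih1 hs).mp (ih2 hs)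
  | ax1 A B => exact fun _ => .ax1 A B
  | ax2 A B C => exact fun _ => .ax2 A B C
  | ax3 A B => exact fun _ => .ax3 A B
  | ax4 A B => exact fun _ => .ax4 A B
  | ax5 A B C => exact fun _ => .ax5 A B C
  | ax6 A B => exact fun _ => .ax6 A B
  | ax7 A B => exact fun _ => .ax7 A B
  | ax8 A B C => exact fun _ => .ax8 A B C
  | axM1 A B => exact fun _ => .axM1 A B
  | axM2 A B C => exact fun _ => .axM2 A B C
  | axM3 A B C => exact fun _ => .axM3 A B C
  | axM4 A B C => exact fun _ => .axM4 A B C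
  | axM5 A B C => exact fun _ => .axM5 A B C
  | axM6 A B C => exact fun _ => .axM6 A B C
  | axE A => exact fun _ => .axE A

namespace SW
open Formula

variable {Γ : Set Formula} {A B C X Y : Formula}

/-- modus ponens for the intuitionistic conditional, via AxM1. -/
theorem mpi (h1 : WDeriv Γ A) (h2 : WDeriv Γ (A.imp B)) : WDeriv Γ B :=
  h1.mp (h2.mp (WDeriv.axM1 A B))

/-- A → A -/
theorem idI : WDeriv Γ (A.imp A) :=
  mpi (WDeriv.ax1 A A) (mpi (WDeriv.ax1 A (A.imp A)) (WDeriv.ax2 A (A.imp A) A))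

/-- A ⊃ A -/
theorem idS : WDeriv Γ (A.sup A) := (idI (A := A)).mp (WDeriv.axM1 A A)

/-- B ⊃ (X → B) -/
theorem supK : WDeriv Γ (B.sup (X.imp B)) :=
  mpi (mpi (idS (A := B)) (WDeriv.ax1 (B.sup B) X)) (WDeriv.axM4 X B B)

/-- weakening under ⊃ -/
theorem wkS (h : WDeriv Γ B) : WDeriv Γ (A.sup B) :=
  (h.mp (supK (B := B) (X := A))).mp (WDeriv.axM1 A B)

/-- C → (B ⊃ C) -/
theorem impSup : WDeriv Γ (C.imp (B.sup C)) :=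
  mpi (wkS (idI (A := C))) (WDeriv.axM3 B C C)

/-- from A ⊃ (B ⊃ C) and A ⊃ B infer A ⊃ C -/
theorem supS (h1 : WDeriv Γ (A.sup (B.sup C))) (h2 : WDeriv Γ (A.sup B)) :
    WDeriv Γ (A.sup C) :=
  h2.mp (mpi h1 (WDeriv.axM2 A B C))

/-- transitivity of ⊃ -/
theorem supTrans (h1 : WDeriv Γ (A.sup B)) (h2 : WDeriv Γ (B.sup C)) :
    WDeriv Γ (A.sup C) :=
  supS (wkS h2) h1

/-- from B infer (B ⊃ C) → C -/
theorem supElim (h : WDeriv Γ B) : WDeriv Γ ((B.sup C).imp C) :=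
  h.mp (mpi (idI (A := B.sup C)) (WDeriv.axM4 (B.sup C) B C))

/-- deduction theorem for ⊃ -/
theorem dedS : ∀ {Δ C}, WDeriv Δ C → ∀ {Γ : Set Formula} {B}, Δ ⊆ insert B Γ →
    WDeriv Γ (B.sup C) := by
  intro Δ C h
  induction h with
  | hyp h => intro Γ B hs
             rcases hs h with h' | h'
             · exact h' ▸ idS
             · exact wkS (.hyp h')
  | mp _ _ ih1 ih2 => exact fun hs => supS (ih2 hs) (ih1 hs)
  | ax1 A B => exact fun _ => wkS (.ax1 A B)
  | ax2 A B C => exact fun _ => wkS (.ax2 A B C)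
  | ax3 A B => exact fun _ => wkS (.ax3 A B)
  | ax4 A B => exact fun _ => wkS (.ax4 A B)
  | ax5 A B C => exact fun _ => wkS (.ax5 A B C)
  | ax6 A B => exact fun _ => wkS (.ax6 A B)
  | ax7 A B => exact fun _ => wkS (.ax7 A B)
  | ax8 A B C => exact fun _ => wkS (.ax8 A B C)
  | axM1 A B => exact fun _ => wkS (.axM1 A B)
  | axM2 A B C => exact fun _ => wkS (.axM2 A B C)
  | axM3 A B C => exact fun _ => wkS (.axM3 A B C)
  | axM4 A B C => exact fun _ => wkS (.axM4 A B C)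
  | axM5 A B C => exact fun _ => wkS (.axM5 A B C)
  | axM6 A B C => exact fun _ => wkS (.axM6 A B C)
  | axE A => exact fun _ => wkS (.axE A)

theorem dedS' (h : WDeriv (insert B Γ) C) : WDeriv Γ (B.sup C) :=
  dedS h (le_refl _)

/-- closure of `S` (plus all theorems) under →-modus ponens -/
inductive Cl (S : Set Formula) : Formula → Prop
  | base {X : Formula} : X ∈ S → Cl S X
  | thm {X : Formula} : WDeriv ∅ X → Cl S X
  | mp {X Y : Formula} : Cl S X → Cl S (X.imp Y) → Cl S Y

theorem Cl.mono : ∀ {S X}, Cl S X → ∀ {T : Set Formula}, S ⊆ T → Cl T X := by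
  intro S X h
  induction h with
  | base h => exact fun hs => .base (hs h)
  | thm h => exact fun _ => .thm h
  | mp _ _ ih1 ih2 => exact fun hs => (ih1 hs).mp (ih2 hs)

theorem Cl.cut : ∀ {S X}, Cl S X → ∀ {T : Set Formula}, (∀ Y ∈ S, Cl T Y) → Cl T X := by
  intro S X h
  induction h with
  | base h => exact fun hs => hs _ h
  | thm h => exact fun _ => .thm h
  | mp _ _ ih1 ih2 => exact fun hs => (ih1 hs).mp (ih2 hs)

theorem Cl.sound : ∀ {S X}, Cl S X → ∀ {Γ : Set Formula}, (∀ Y ∈ S, WDeriv Γ Y) → WDeriv Γ X := by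
  intro S X h
  induction h with
  | base h => exact fun hs => hs _ h
  | thm h => exact fun _ => h.mono (Set.empty_subset _)
  | mp _ _ ih1 ih2 => exact fun hs => mpi (ih1 hs) (ih2 hs)

/-- deduction theorem for `Cl` and `→` -/
theorem Cl.ded : ∀ {S X}, Cl S X → ∀ {T : Set Formula} {B}, S ⊆ insert B T → Cl T (B.imp X) := by
  intro S X h
  induction h with
  | base h =>
      intro T B hs
      rcases hs h with h' | h'
      · exact h' ▸ .thm idI
      · exact (Cl.base h').mp (.thm (.ax1 _ B))
  | thm h => exact fun _ => (Cl.thm h).mp (.thm (.ax1 _ _))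
  | mp _ _ ih1 ih2 =>
      exact fun hs => (ih1 hs).mp ((ih2 hs).mp (.thm (.ax2 _ _ _)))

theorem Cl.ded' {S : Set Formula} {B X} (h : Cl (insert B S) X) : Cl S (B.imp X) :=
  h.ded (le_refl _)

/-- B → (C → (B ∧ C)) is a theorem. -/
theorem andIntroThm : WDeriv Γ (B.imp (C.imp (B.and C))) := by
  have h : Cl {B, C} (B.and C) := by
    have hCB : Cl {B, C} (C.imp B) :=
      (Cl.base (by simp)).mp (.thm (.ax1 B C))
    have h5 : Cl {B, C} ((C.imp C).imp (C.imp (B.and C))) :=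
      hCB.mp (.thm (.ax5 B C C))
    have hCBC : Cl {B, C} (C.imp (B.and C)) := (Cl.thm idI).mp h5
    exact (Cl.base (by simp)).mp hCBC
  have hC : Cl {B} (C.imp (B.and C)) :=
    Cl.ded h (by intro x hx; simp at hx ⊢; tauto)
  have h2 : Cl (∅ : Set Formula) (B.imp (C.imp (B.and C))) :=
    Cl.ded hC (by simp)
  exact h2.sound (by simp)

theorem Cl_iUnion {S : ℕ → Set Formula} (mono : ∀ n, S n ⊆ S (n+1)) {X}
    (h : Cl (⋃ n, S n) X) : ∃ n, Cl (S n) X := by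
  have chain : ∀ {m n}, m ≤ n → S m ⊆ S n := by
    intro m n hmn
    induction hmn with
    | refl => exact le_refl _
    | step h ih => exact le_trans ih (mono _)
  generalize hU : (⋃ n, S n) = U at h
  induction h with
  | base h => obtain ⟨n, hn⟩ := Set.mem_iUnion.1 (hU ▸ h); exact ⟨n, .base hn⟩
  | thm h => exact ⟨0, .thm h⟩
  | mp _ _ ih1 ih2 =>
      obtain ⟨n, hn⟩ := ih1
      obtain ⟨m, hm⟩ := ih2
      exact ⟨max n m, (hn.mono (chain (le_max_left n m))).mp
        (hm.mono (chain (le_max_right n m)))⟩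

theorem WDeriv_iUnion {S : ℕ → Set Formula} (mono : ∀ n, S n ⊆ S (n+1)) {X}
    (h : WDeriv (⋃ n, S n) X) : ∃ n, WDeriv (S n) X := by
  have chain : ∀ {m n}, m ≤ n → S m ⊆ S n := by
    intro m n hmn
    induction hmn with
    | refl => exact le_refl _
    | step h ih => exact le_trans ih (mono _)
  generalize hU : (⋃ n, S n) = U at h
  induction h with
  | hyp h => obtain ⟨n, hn⟩ := Set.mem_iUnion.1 (hU ▸ h); exact ⟨n, .hyp hn⟩
  | mp _ _ ih1 ih2 =>
      obtain ⟨n, hn⟩ := ih1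
      obtain ⟨m, hm⟩ := ih2
      exact ⟨max n m, (hn.mono (chain (le_max_left n m))).mp
        (hm.mono (chain (le_max_right n m)))⟩
  | ax1 A B => exact ⟨0, .ax1 A B⟩
  | ax2 A B C => exact ⟨0, .ax2 A B C⟩
  | ax3 A B => exact ⟨0, .ax3 A B⟩
  | ax4 A B => exact ⟨0, .ax4 A B⟩
  | ax5 A B C => exact ⟨0, .ax5 A B C⟩
  | ax6 A B => exact ⟨0, .ax6 A B⟩
  | ax7 A B => exact ⟨0, .ax7 A B⟩
  | ax8 A B C => exact ⟨0, .ax8 A B C⟩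
  | axM1 A B => exact ⟨0, .axM1 A B⟩
  | axM2 A B C => exact ⟨0, .axM2 A B C⟩
  | axM3 A B C => exact ⟨0, .axM3 A B C⟩
  | axM4 A B C => exact ⟨0, .axM4 A B C⟩
  | axM5 A B C => exact ⟨0, .axM5 A B C⟩
  | axM6 A B C => exact ⟨0, .axM6 A B C⟩
  | axE A => exact ⟨0, .axE A⟩
/-! ### enumeration of formulas -/

def enc : Formula → ℕ
  | .var n => Nat.pair 0 n
  | .bot => Nat.pair 1 0
  | .and a b => Nat.pair 2 (Nat.pair (enc a) (enc b))
  | .or a b => Nat.pair 3 (Nat.pair (enc a) (enc b))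
  | .imp a b => Nat.pair 4 (Nat.pair (enc a) (enc b))
  | .sup a b => Nat.pair 5 (Nat.pair (enc a) (enc b))

theorem enc_inj : ∀ a b : Formula, enc a = enc b → a = b := by
  intro a
  induction a with
  | var n => intro b h; cases b <;> simp [enc, Nat.pair_eq_pair] at h ⊢; exact h
  | bot => intro b h; cases b <;> simp [enc, Nat.pair_eq_pair] at h ⊢
  | and x y ihx ihy =>
      intro b h; cases b <;> simp [enc, Nat.pair_eq_pair] at h ⊢
      rename_i u v; exact ⟨ihx u h.1, ihy v h.2⟩
  | or x y ihx ihy =>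
      intro b h; cases b <;> simp [enc, Nat.pair_eq_pair] at h ⊢
      rename_i u v; exact ⟨ihx u h.1, ihy v h.2⟩
  | imp x y ihx ihy =>
      intro b h; cases b <;> simp [enc, Nat.pair_eq_pair] at h ⊢
      rename_i u v; exact ⟨ihx u h.1, ihy v h.2⟩
  | sup x y ihx ihy =>
      intro b h; cases b <;> simp [enc, Nat.pair_eq_pair] at h ⊢
      rename_i u v; exact ⟨ihx u h.1, ihy v h.2⟩

instance : Nonempty Formula := ⟨Formula.bot⟩
instance : Countable Formula := ⟨enc, fun {a b} h => enc_inj a b h⟩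

noncomputable def fenum : ℕ → Formula := (exists_surjective_nat Formula).choose

theorem fenum_surj : Function.Surjective fenum := (exists_surjective_nat Formula).choose_spec

/-! ### roots -/

/-- the properties of the root theory of the canonical model -/
structure Root (Δ₀ : Set Formula) : Prop where
  closed : ∀ {X}, WDeriv Δ₀ X → X ∈ Δ₀
  prime : ∀ {X Y}, X.or Y ∈ Δ₀ → X ∈ Δ₀ ∨ Y ∈ Δ₀
  supC : ∀ {X}, X ∉ Δ₀ → ∀ Y, X.sup Y ∈ Δ₀
  botFree : Formula.bot ∉ Δ₀

open scoped Classical in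
/-- Lindenbaum construction for the root. -/
noncomputable def LA (Γ : Set Formula) (A : Formula) : ℕ → Set Formula
  | 0 => Γ
  | n+1 => insert (if WDeriv (insert (fenum n) (LA Γ A n)) A
      then (fenum n).sup .bot else fenum n) (LA Γ A n)

theorem LA_mono (Γ : Set Formula) (A : Formula) (n : ℕ) : LA Γ A n ⊆ LA Γ A (n+1) := by
  intro x hx; exact Set.mem_insert_of_mem _ hx

theorem LA_nd {Γ : Set Formula} {A : Formula} (h : ¬ WDeriv Γ A) :
    ∀ n, ¬ WDeriv (LA Γ A n) A := by
  intro n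
  induction n with
  | zero => exact h
  | succ n ih =>
      by_cases hc : WDeriv (insert (fenum n) (LA Γ A n)) A
      · simp only [LA, if_pos hc]
        intro hcon
        apply ih
        have h1 : WDeriv (LA Γ A n) ((fenum n).sup A) := dedS' hc
        have h2 : WDeriv (LA Γ A n) (((fenum n).sup .bot).sup A) := dedS' hcon
        exact mpi h1 (mpi h2 (WDeriv.axM5 (fenum n) .bot A))
      · simp only [LA, if_neg hc]
        exact hc

/-- the limit of the Lindenbaum construction -/
noncomputable def LAω (Γ : Set Formula) (A : Formula) : Set Formula := ⋃ n, LA Γ A n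

/-- the root theory -/
noncomputable def rootSet (Γ : Set Formula) (A : Formula) : Set Formula :=
  {X | WDeriv (LAω Γ A) X}

theorem rootSet_nd {Γ : Set Formula} {A : Formula} (h : ¬ WDeriv Γ A) :
    ¬ WDeriv (LAω Γ A) A := by
  intro hcon
  obtain ⟨n, hn⟩ := WDeriv_iUnion (LA_mono Γ A) hcon
  exact LA_nd h n hn

theorem rootSet_root {Γ : Set Formula} {A : Formula} (h : ¬ WDeriv Γ A) :
    Root (rootSet Γ A) := by
  have nd := rootSet_nd h
  constructor
  · -- closed
    intro X hX
    exact hX.cut (fun Y hY => hY)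
  · -- prime
    intro X Y hor
    by_contra hcon
    push_neg at hcon
    apply nd
    -- X ∉, Y ∉ root, so X⊃⊥ and Y⊃⊥ are in the root
    have hX : WDeriv (LAω Γ A) (X.sup .bot) := by
      obtain ⟨n, hn⟩ := fenum_surj X
      by_cases hc : WDeriv (insert (fenum n) (LA Γ A n)) A
      · apply WDeriv.hyp
        apply Set.mem_iUnion.2 ⟨n+1, _⟩
        simp only [LA, if_pos hc, hn]
        exact Set.mem_insert _ _
      · exfalso; apply hcon.1
        apply WDeriv.hyp
        apply Set.mem_iUnion.2 ⟨n+1, _⟩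
        simp only [LA, if_neg hc, hn]
        exact Set.mem_insert _ _
    have hY : WDeriv (LAω Γ A) (Y.sup .bot) := by
      obtain ⟨n, hn⟩ := fenum_surj Y
      by_cases hc : WDeriv (insert (fenum n) (LA Γ A n)) A
      · apply WDeriv.hyp
        apply Set.mem_iUnion.2 ⟨n+1, _⟩
        simp only [LA, if_pos hc, hn]
        exact Set.mem_insert _ _
      · exfalso; apply hcon.2
        apply WDeriv.hyp
        apply Set.mem_iUnion.2 ⟨n+1, _⟩
        simp only [LA, if_neg hc, hn]
        exact Set.mem_insert _ _
    have hXY : WDeriv (LAω Γ A) ((X.or Y).sup .bot) :=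
      mpi hY (mpi hX (WDeriv.axM6 X Y .bot))
    exact (hor.mp hXY).mp (WDeriv.axE A)
  · -- supC
    intro X hX Y
    obtain ⟨n, hn⟩ := fenum_surj X
    by_cases hc : WDeriv (insert (fenum n) (LA Γ A n)) A
    · have hXb : WDeriv (LAω Γ A) (X.sup .bot) := by
        apply WDeriv.hyp
        apply Set.mem_iUnion.2 ⟨n+1, _⟩
        simp only [LA, if_pos hc, hn]
        exact Set.mem_insert _ _
      exact supTrans hXb (WDeriv.axE Y)
    · exfalso; apply hX
      apply WDeriv.hyp
      apply Set.mem_iUnion.2 ⟨n+1, _⟩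
      simp only [LA, if_neg hc, hn]
      exact Set.mem_insert _ _
  · -- botFree
    intro hbot
    exact nd (hbot.mp (WDeriv.axE A))

theorem rootSet_sub {Γ : Set Formula} {A : Formula} : Γ ⊆ rootSet Γ A :=
  fun _ hX => WDeriv.hyp (Set.mem_iUnion.2 ⟨0, hX⟩)

theorem rootSet_avoid {Γ : Set Formula} {A : Formula} (h : ¬ WDeriv Γ A) :
    A ∉ rootSet Γ A := rootSet_nd h
/-! ### worlds of the canonical model -/

/-- extra assumptions available at every world, relative to root Δ₀ -/
def T0 (Δ₀ : Set Formula) : Set Formula :=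
  {F | ∃ X Y : Formula, (F = X.sup Y ∧ X ∉ Δ₀) ∨ (F = (X.sup Y).imp Y ∧ X ∈ Δ₀)}

/-- worlds: sets containing Δ₀, closed under `Cl (· ∪ T0 Δ₀)`, and prime -/
def isWorld (Δ₀ Δ : Set Formula) : Prop :=
  Δ₀ ⊆ Δ ∧ (∀ X, Cl (Δ ∪ T0 Δ₀) X → X ∈ Δ) ∧ ∀ X Y, X.or Y ∈ Δ → X ∈ Δ ∨ Y ∈ Δ

theorem root_world {Δ₀ : Set Formula} (R : Root Δ₀) : isWorld Δ₀ Δ₀ := by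
  refine ⟨le_refl _, fun X h => R.closed (h.sound ?_), fun X Y h => R.prime h⟩
  rintro Y (hY | ⟨X', Y', ⟨rfl, h'⟩ | ⟨rfl, h'⟩⟩)
  · exact .hyp hY
  · exact .hyp (R.supC h' Y')
  · exact supElim (.hyp h')

open scoped Classical in
/-- Lindenbaum construction for successor worlds -/
noncomputable def LB (Δ₀ Δ : Set Formula) (B C : Formula) : ℕ → Set Formula
  | 0 => insert B Δ
  | n+1 => if Cl (insert (fenum n) (LB Δ₀ Δ B C n) ∪ T0 Δ₀) C
      then LB Δ₀ Δ B C n else insert (fenum n) (LB Δ₀ Δ B C n)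

theorem LB_mono (Δ₀ Δ : Set Formula) (B C : Formula) (n : ℕ) :
    LB Δ₀ Δ B C n ⊆ LB Δ₀ Δ B C (n+1) := by
  by_cases hc : Cl (insert (fenum n) (LB Δ₀ Δ B C n) ∪ T0 Δ₀) C
  · simp only [LB, if_pos hc]; exact le_refl _
  · simp only [LB, if_neg hc]; exact Set.subset_insert _ _

theorem LB_nd {Δ₀ Δ : Set Formula} {B C : Formula} (hW : isWorld Δ₀ Δ)
    (hBC : B.imp C ∉ Δ) : ∀ n, ¬ Cl (LB Δ₀ Δ B C n ∪ T0 Δ₀) C := by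
  intro n
  induction n with
  | zero =>
      intro hcon
      apply hBC
      apply hW.2.1
      refine Cl.ded hcon ?_
      rintro x (hx | hx)
      · rcases hx with rfl | hx
        · exact Set.mem_insert _ _
        · exact Set.mem_insert_of_mem _ (Or.inl hx)
      · exact Set.mem_insert_of_mem _ (Or.inr hx)
  | succ n ih =>
      by_cases hc : Cl (insert (fenum n) (LB Δ₀ Δ B C n) ∪ T0 Δ₀) C
      · simp only [LB, if_pos hc]; exact ih
      · simp only [LB, if_neg hc]; exact hc

theorem existsSucc {Δ₀ Δ : Set Formula} {B C : Formula} (_R : Root Δ₀)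
    (hW : isWorld Δ₀ Δ) (hBC : B.imp C ∉ Δ) :
    ∃ Δ', isWorld Δ₀ Δ' ∧ Δ ⊆ Δ' ∧ B ∈ Δ' ∧ C ∉ Δ' := by
  set P : Set Formula := ⋃ n, LB Δ₀ Δ B C n with hP
  set Δ' : Set Formula := {X | Cl (P ∪ T0 Δ₀) X} with hΔ'
  have hunion : P ∪ T0 Δ₀ = ⋃ n, (LB Δ₀ Δ B C n ∪ T0 Δ₀) := by
    ext x
    simp only [hP, Set.mem_union, Set.mem_iUnion]
    constructor
    · rintro (⟨n, h⟩ | h)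
      · exact ⟨n, Or.inl h⟩
      · exact ⟨0, Or.inr h⟩
    · rintro ⟨n, h | h⟩
      · exact Or.inl ⟨n, h⟩
      · exact Or.inr h
  have hCnot : ¬ Cl (P ∪ T0 Δ₀) C := by
    intro hcon
    rw [hunion] at hcon
    obtain ⟨n, hn⟩ := Cl_iUnion (fun n => Set.union_subset_union_left _ (LB_mono Δ₀ Δ B C n)) hcon
    exact LB_nd hW hBC n hn
  have hPsub : P ⊆ Δ' := fun x hx => Cl.base (Or.inl hx)
  have hstage : ∀ n, LB Δ₀ Δ B C n ⊆ P := fun n x hx => Set.mem_iUnion.2 ⟨n, hx⟩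
  have hmax : ∀ E, E ∉ Δ' → Cl (insert E P ∪ T0 Δ₀) C := by
    intro E hE
    obtain ⟨n, rfl⟩ := fenum_surj E
    by_cases hc : Cl (insert (fenum n) (LB Δ₀ Δ B C n) ∪ T0 Δ₀) C
    · refine hc.mono (Set.union_subset_union_left _ ?_)
      intro x hx
      rcases hx with rfl | hx
      · exact Set.mem_insert _ _
      · exact Set.mem_insert_of_mem _ (hstage n hx)
    · exfalso
      apply hE
      apply hPsub
      apply hstage (n+1)
      simp only [LB, if_neg hc]
      exact Set.mem_insert _ _
  have hded : ∀ E, E ∉ Δ' → Cl (P ∪ T0 Δ₀) (E.imp C) := by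
    intro E hE
    refine Cl.ded (hmax E hE) ?_
    rintro x (hx | hx)
    · rcases hx with rfl | hx
      · exact Set.mem_insert _ _
      · exact Set.mem_insert_of_mem _ (Or.inl hx)
    · exact Set.mem_insert_of_mem _ (Or.inr hx)
  refine ⟨Δ', ⟨?_, ?_, ?_⟩, ?_, ?_, ?_⟩
  · -- Δ₀ ⊆ Δ'
    intro x hx
    exact hPsub (hstage 0 (Set.mem_insert_of_mem _ (hW.1 hx)))
  · -- closed
    intro X hX
    refine hX.cut ?_
    rintro Y (hY | hY)
    · exact hY
    · exact .base (Or.inr hY)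
  · -- prime
    intro X Y hor
    by_contra hcon
    push_neg at hcon
    have hX := hded X hcon.1
    have hY := hded Y hcon.2
    exact hCnot (Cl.mp hor (hY.mp (hX.mp (.thm (.ax8 X Y C)))))
  · exact fun x hx => hPsub (hstage 0 (Set.mem_insert_of_mem _ hx))
  · exact hPsub (hstage 0 (Set.mem_insert _ _))
  · exact hCnot

/-! ### the canonical model -/

noncomputable def canon (Δ₀ : Set Formula) (R : Root Δ₀) : WModel where
  W := {D : Set Formula // isWorld Δ₀ D}
  le a b := a.1 ⊆ b.1
  refl _ := le_refl _
  trans _ _ _ h1 h2 := h1.trans h2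
  g := ⟨Δ₀, root_world R⟩
  least w := w.2.1
  V D p := Formula.var p ∈ D.1
  Vbot D := Formula.bot ∈ D.1
  hered _ _ _ h hle := hle h
  heredBot _ _ h hle := hle h
  botG := R.botFree

theorem satLemma {Δ₀ : Set Formula} (R : Root Δ₀) :
    ∀ (X : Formula) (D : (canon Δ₀ R).W), (canon Δ₀ R).sat X D ↔ X ∈ D.1 := by
  intro X
  induction X with
  | var p => intro D; exact Iff.rfl
  | bot => intro D; exact Iff.rfl
  | and B C ih1 ih2 =>
      intro D
      simp only [WModel.sat, ih1 D, ih2 D]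
      constructor
      · rintro ⟨h1, h2⟩
        exact D.2.2.1 _ ((Cl.base (Or.inl h2)).mp ((Cl.base (Or.inl h1)).mp (.thm andIntroThm)))
      · intro h
        exact ⟨D.2.2.1 _ ((Cl.base (Or.inl h)).mp (.thm (.ax3 B C))),
               D.2.2.1 _ ((Cl.base (Or.inl h)).mp (.thm (.ax4 B C)))⟩
  | or B C ih1 ih2 =>
      intro D
      simp only [WModel.sat, ih1 D, ih2 D]
      constructor
      · rintro (h | h)
        · exact D.2.2.1 _ ((Cl.base (Or.inl h)).mp (.thm (.ax6 B C)))
        · exact D.2.2.1 _ ((Cl.base (Or.inl h)).mp (.thm (.ax7 B C)))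
      · exact D.2.2.2 B C
  | sup B C ih1 ih2 =>
      intro D
      have hg := ih1 (canon Δ₀ R).g
      have hD := ih2 D
      simp only [WModel.sat, hg, hD]
      constructor
      · rintro (h | h)
        · exact D.2.2.1 _ (.base (Or.inr ⟨B, C, Or.inl ⟨rfl, h⟩⟩))
        · exact D.2.2.1 _ ((Cl.base (Or.inl h)).mp (.thm impSup))
      · intro h
        by_cases hB : B ∈ Δ₀
        · exact Or.inr (D.2.2.1 _ ((Cl.base (Or.inl h)).mp
            (.base (Or.inr ⟨B, C, Or.inr ⟨rfl, hB⟩⟩))))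
        · exact Or.inl hB
  | imp B C ih1 ih2 =>
      intro D
      simp only [WModel.sat]
      constructor
      · intro hs
        by_contra hne
        obtain ⟨Δ', hW', hsub, hB, hC⟩ := existsSucc R D.2 hne
        have := hs ⟨Δ', hW'⟩ hsub ((ih1 ⟨Δ', hW'⟩).2 hB)
        exact hC ((ih2 ⟨Δ', hW'⟩).1 this)
      · intro h x hle hBx
        exact (ih2 x).2 (x.2.2.1 _
          ((Cl.base (Or.inl ((ih1 x).1 hBx))).mp (.base (Or.inl (hle h)))))
/-! ### soundness -/

theorem sat_mono (M : WModel) :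
    ∀ (X : Formula) (w x : M.W), M.le w x → M.sat X w → M.sat X x := by
  intro X
  induction X with
  | var p => exact fun w x hle h => M.hered _ _ _ h hle
  | bot => exact fun w x hle h => M.heredBot _ _ h hle
  | and B C ih1 ih2 => exact fun w x hle h => ⟨ih1 w x hle h.1, ih2 w x hle h.2⟩
  | or B C ih1 ih2 =>
      rintro w x hle (h | h)
      · exact Or.inl (ih1 w x hle h)
      · exact Or.inr (ih2 w x hle h)
  | sup B C ih1 ih2 =>
      rintro w x hle (h | h)
      · exact Or.inl h
      · exact Or.inr (ih2 w x hle h)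
  | imp B C ih1 ih2 =>
      intro w x hle h y hy hB
      exact h y (M.trans _ _ _ hle hy) hB

theorem soundness {Γ : Set Formula} {A : Formula} (h : WDeriv Γ A) : WConseq Γ A := by
  intro M hΓ
  induction h with
  | hyp h => exact hΓ _ h
  | mp h1 h2 ih1 ih2 =>
      simp only [WModel.sat] at ih2
      rcases ih2 with h | h
      · exact absurd ih1 h
      · exact h
  | ax1 A B =>
      simp only [WModel.sat]
      intro x _ hA y hxy _
      exact sat_mono M A x y hxy hA
  | ax2 A B C =>
      simp only [WModel.sat]
      intro x _ h1 y hxy h2 z hyz h3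
      exact h1 z (M.trans _ _ _ hxy hyz) h3 z (M.refl z) (h2 z hyz h3)
  | ax3 A B =>
      simp only [WModel.sat]
      exact fun x _ h => h.1
  | ax4 A B =>
      simp only [WModel.sat]
      exact fun x _ h => h.2
  | ax5 A B C =>
      simp only [WModel.sat]
      intro x _ h1 y hxy h2 z hyz h3
      exact ⟨h1 z (M.trans _ _ _ hxy hyz) h3, h2 z hyz h3⟩
  | ax6 A B =>
      simp only [WModel.sat]
      exact fun x _ h => Or.inl h
  | ax7 A B =>
      simp only [WModel.sat]
      exact fun x _ h => Or.inr h
  | ax8 A B C =>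
      simp only [WModel.sat]
      intro x _ h1 y hxy h2 z hyz h3
      rcases h3 with h3 | h3
      · exact h1 z (M.trans _ _ _ hxy hyz) h3
      · exact h2 z hyz h3
  | axM1 A B =>
      simp only [WModel.sat]
      rcases Classical.em (∀ x, M.le M.g x → M.sat A x → M.sat B x) with h | h
      · right
        rcases Classical.em (M.sat A M.g) with hA | hA
        · exact Or.inr (h M.g (M.refl _) hA)
        · exact Or.inl hA
      · exact Or.inl h
  | axM2 A B C =>
      simp only [WModel.sat]
      intro x _ h1
      rcases Classical.em (M.sat A M.g) with hA | hA
      · rcases h1 with h1 | h1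
        · exact absurd hA h1
        · rcases h1 with h1 | h1
          · exact Or.inl (fun hc => hc.elim (fun hc' => hc' hA) h1)
          · exact Or.inr (Or.inr h1)
      · exact Or.inr (Or.inl hA)
  | axM3 A B C =>
      simp only [WModel.sat]
      intro x _ h1 y hxy hB
      rcases h1 with h1 | h1
      · exact Or.inl h1
      · exact Or.inr (h1 y hxy hB)
  | axM4 A B C =>
      simp only [WModel.sat]
      intro x _ h1
      rcases Classical.em (M.sat B M.g) with hB | hB
      · right
        intro y hxy hA
        rcases h1 y hxy hA with h | h
        · exact absurd hB h
        · exact h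
      · exact Or.inl hB
  | axM5 A B C =>
      simp only [WModel.sat]
      intro x _ h1 y hxy h2
      rcases h1 with h1 | h1
      · push_neg at h1
        rcases h2 with h2 | h2
        · exact absurd h1.1 h2
        · exact h2
      · exact sat_mono M C x y hxy h1
  | axM6 A B C =>
      simp only [WModel.sat]
      intro x _ h1 y hxy h2
      rcases Classical.em (M.sat A M.g ∨ M.sat B M.g) with hAB | hAB
      · right
        rcases hAB with hA | hB
        · rcases h1 with h1 | h1
          · exact absurd hA h1
          · exact sat_mono M C x y hxy h1
        · rcases h2 with h2 | h2
          · exact absurd hB h2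
          · exact h2
      · exact Or.inl hAB
  | axE A =>
      simp only [WModel.sat]
      exact Or.inl M.botG

end SW


/-- Soundness and completeness of S⊥w : Γ ⊢_{⊥w} A iff Γ ⊨_{⊥w} A. -/
theorem soundness_completeness_W (Γ : Set Formula) (A : Formula) :
    WDeriv Γ A ↔ WConseq Γ A := by
  constructor
  · exact SW.soundness
  · intro h
    by_contra hnd
    have R := SW.rootSet_root hnd
    have hsat : ∀ B ∈ Γ, (SW.canon _ R).sat B (SW.canon _ R).g :=
      fun B hB => (SW.satLemma R B (SW.canon _ R).g).2 (SW.rootSet_sub hB)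
    exact SW.rootSet_avoid hnd ((SW.satLemma R A (SW.canon _ R).g).1 (h (SW.canon _ R) hsat))
end

section
/- (Non-definability of intuitionistic absurdity in S⊥w) There is no formula F of L_{⊥,⊃} such that I(w, F) = 0 for every world w of every S⊥w-model ⟨g, W, ≤, V⟩. -/
/-- A model where everything (including ⊥) holds at the top world `true`. -/
def topModel : WModel where
  W := Bool
  le a b := a = true → b = true
  refl _ h := h
  trans _ _ _ h1 h2 h := h2 (h1 h)
  g := false
  least _ h := by simp at h
  V w _ := w = true
  Vbot w := w = true
  hered _ _ _ h le := le h
  heredBot _ _ h le := le h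
  botG h := by simp at h

lemma topModel_sat (F : Formula) : topModel.sat F true := by
  induction F with
  | var p => rfl
  | bot => rfl
  | and A B ihA ihB => exact ⟨ihA, ihB⟩
  | or A B ihA ihB => exact Or.inl ihA
  | imp A B ihA ihB =>
    intro x hx _
    have : x = true := hx rfl
    subst this; exact ihB
  | sup A B ihA ihB => exact Or.inr ihB

/-- Non-definability of intuitionistic absurdity in S⊥w : there is no
formula F of L_{⊥,⊃} with I(w,F)=0 at every world of every S⊥w-model. -/
theorem no_intuitionistic_absurdity :
    ¬ ∃ F : Formula, ∀ (M : WModel) (w : M.W), ¬ M.sat F w := by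
  rintro ⟨F, hF⟩
  exact hF topModel true (topModel_sat F)
end
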